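/- arXiv:1310.7093 — 3 statements merged into one kernel-verified Lean document; each statement's English description precedes it below -/
import Mathlib

section
/- Every language over a countably infinite name alphabet N that is a countable union of pattern languages, all of whose constants lie in a common finite set F ⊆ N, is invariant under every permutation π : Equiv.Perm N fixing F pointwise: the image of the language under w ↦ w.map π equals the language. (This is the schematic-word form of the proposition that all nominal regular languages are closed under α-equivalence.) -/
/-- Freshness conditions over `k` positions with names from `N`: finite
conjunctions (`tru` is the empty conjunction) and disjunctions of atomic
constraints `x i ≠ x j` and `x i ≠ n`. -/
inductive Fresh (N : Type) (k : ℕ) : Type where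
  | tru : Fresh N k
  | neVar : Fin k → Fin k → Fresh N k
  | neConst : Fin k → N → Fresh N k
  | and : Fresh N k → Fresh N k → Fresh N k
  | or : Fresh N k → Fresh N k → Fresh N k

/-- Satisfaction of a freshness condition by an assignment of names. -/
def Fresh.sat {N : Type} {k : ℕ} : Fresh N k → (Fin k → N) → Prop
  | .tru, _ => True
  | .neVar i j, x => x i ≠ x j
  | .neConst i n, x => x i ≠ n
  | .and φ ψ, x => φ.sat x ∧ ψ.sat x
  | .or φ ψ, x => φ.sat x ∨ ψ.sat x

/-- The set of constant names occurring in a freshness condition. -/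
def Fresh.consts {N : Type} {k : ℕ} : Fresh N k → Set N
  | .tru => ∅
  | .neVar _ _ => ∅
  | .neConst _ n => {n}
  | .and φ ψ => φ.consts ∪ ψ.consts
  | .or φ ψ => φ.consts ∪ ψ.consts

/-- The pattern language of a freshness condition: all words of length `k`
whose entries satisfy `φ`. -/
def patLang {N : Type} (k : ℕ) (φ : Fresh N k) : Set (List N) :=
  { w | ∃ x : Fin k → N, w = List.ofFn x ∧ φ.sat x }

lemma Fresh.sat_comp {N : Type} {k : ℕ} (π : Equiv.Perm N)
    (φ : Fresh N k) (hπ : ∀ n ∈ φ.consts, π n = n) (x : Fin k → N) :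
    φ.sat (fun i => π (x i)) ↔ φ.sat x := by
  induction φ with
  | tru => simp [Fresh.sat]
  | neVar i j => simp [Fresh.sat, π.injective.ne_iff]
  | neConst i n =>
      have h : π n = n := hπ n (by simp [Fresh.consts])
      simp only [Fresh.sat]
      constructor
      · intro h' he; exact h' (by rw [he, h])
      · intro h' he; exact h' (π.injective (by rw [he, h]))
  | and φ ψ ihφ ihψ =>
      simp only [Fresh.sat]
      rw [ihφ (fun n hn => hπ n (Or.inl hn)), ihψ (fun n hn => hπ n (Or.inr hn))]
  | or φ ψ ihφ ihψ =>
      simp only [Fresh.sat]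
      rw [ihφ (fun n hn => hπ n (Or.inl hn)), ihψ (fun n hn => hπ n (Or.inr hn))]

lemma patLang_image {N : Type} (π : Equiv.Perm N) {k : ℕ} (φ : Fresh N k)
    (hπ : ∀ n ∈ φ.consts, π n = n) :
    (fun w => w.map π) '' patLang k φ = patLang k φ := by
  ext w
  constructor
  · rintro ⟨v, ⟨x, rfl, hx⟩, rfl⟩
    refine ⟨fun i => π (x i), ?_, (Fresh.sat_comp π φ hπ x).2 hx⟩
    show List.map _ _ = _
    rw [List.map_ofFn]; rfl
  · rintro ⟨x, rfl, hx⟩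
    refine ⟨List.ofFn (fun i => π.symm (x i)), ⟨fun i => π.symm (x i), rfl, ?_⟩, ?_⟩
    · refine (Fresh.sat_comp π φ hπ (fun i => π.symm (x i))).1 ?_
      simpa using hx
    · show List.map _ _ = _
      rw [List.map_ofFn]
      congr 1; funext i; simp


theorem iUnion_patLang_perm_invariant {N : Type} [Countable N] [Infinite N]
    (F : Finset N) (k : ℕ → ℕ) (φ : (i : ℕ) → Fresh N (k i))
    (hF : ∀ i, (φ i).consts ⊆ ↑F)
    (π : Equiv.Perm N) (hπ : ∀ n ∈ F, π n = n) :
    (fun w => w.map π) '' (⋃ i, patLang (k i) (φ i)) = ⋃ i, patLang (k i) (φ i) := by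
  rw [Set.image_iUnion]
  refine Set.iUnion_congr fun i => ?_
  exact patLang_image π (φ i) (fun n hn => hπ n (hF i hn))
end

section
/- For a pattern language L = L(k, φ) over a countably infinite name alphabet N and any h : ℕ, the h-fold concatenation power L^h is a pattern language of length h·k (namely L(h·k, ψ_h) where ψ_h imposes φ on each of the h consecutive blocks of k positions). Consequently the Kleene star L∗ = ⋃_{h ∈ ℕ} L^h is a countable union of pattern languages. (This is the core correctness fact behind the language-calculus treatment of the Kleene star, which unfolds the star an arbitrary finite number of times.) -/
/-- `h`-fold concatenation power of a language. -/
def power {N : Type} (L : Set (List N)) : ℕ → Set (List N)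
  | 0 => {[]}
  | h + 1 => { w | ∃ u ∈ L, ∃ v ∈ power L h, w = u ++ v }

/-- Kleene star of a language. -/
def kstar {N : Type} (L : Set (List N)) : Set (List N) := ⋃ h, power L h

/-- The index of the `j`-th position of the `i`-th block of `k` consecutive
positions among `h * k` positions. -/
def blockIdx {h k : ℕ} (i : Fin h) (j : Fin k) : Fin (h * k) :=
  ⟨i.1 * k + j.1, by
    have hi := i.isLt
    have hj := j.isLt
    calc i.1 * k + j.1 < i.1 * k + k := by omega
      _ = (i.1 + 1) * k := by ring
      _ ≤ h * k := Nat.mul_le_mul_right k hi⟩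

-- AUX
def Fresh.remap {N : Type} {k m : ℕ} (f : Fin k → Fin m) : Fresh N k → Fresh N m
  | .tru => .tru
  | .neVar i j => .neVar (f i) (f j)
  | .neConst i n => .neConst (f i) n
  | .and a b => .and (a.remap f) (b.remap f)
  | .or a b => .or (a.remap f) (b.remap f)

lemma Fresh.sat_remap {N : Type} {k m : ℕ} (f : Fin k → Fin m) (φ : Fresh N k)
    (x : Fin m → N) : (φ.remap f).sat x ↔ φ.sat (x ∘ f) := by
  induction φ <;> simp [remap, sat, *]

def bigAnd {N : Type} {m : ℕ} : List (Fresh N m) → Fresh N m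
  | [] => .tru
  | a :: l => .and a (bigAnd l)

lemma sat_bigAnd {N : Type} {m : ℕ} (l : List (Fresh N m)) (x : Fin m → N) :
    (bigAnd l).sat x ↔ ∀ a ∈ l, a.sat x := by
  induction l <;> simp [bigAnd, Fresh.sat, *]

def psiAux {N : Type} (k : ℕ) (φ : Fresh N k) (h : ℕ) : Fresh N (h * k) :=
  bigAnd ((List.finRange h).map fun i => φ.remap (blockIdx i))

lemma sat_psiAux {N : Type} (k : ℕ) (φ : Fresh N k) (h : ℕ) (x : Fin (h * k) → N) :
    (psiAux k φ h).sat x ↔ ∀ i : Fin h, φ.sat fun j => x (blockIdx i j) := by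
  simp only [psiAux, sat_bigAnd, List.mem_map, List.mem_finRange, true_and,
    forall_exists_index, Fresh.sat_remap]
  constructor
  · intro H i; exact (Fresh.sat_remap _ _ _).mp (H _ i rfl)
  · rintro H a i rfl; exact (Fresh.sat_remap _ _ _).mpr (H i)

lemma ofFn_comp_cast {α : Type*} {m n : ℕ} (e : m = n) (f : Fin n → α) :
    List.ofFn (f ∘ Fin.cast e) = List.ofFn f := by subst e; rfl

lemma power_eq {N : Type} (k : ℕ) (φ : Fresh N k) (h : ℕ) :
    power (patLang k φ) h =
      { w | ∃ x : Fin (h * k) → N, w = List.ofFn x ∧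
            ∀ i : Fin h, φ.sat fun j => x (blockIdx i j) } := by
  induction h with
  | zero =>
    ext w
    simp only [power, Set.mem_singleton_iff, Set.mem_setOf_eq]
    constructor
    · rintro rfl
      refine ⟨fun i => absurd i.isLt (by simp), ?_, fun i => i.elim0⟩
      exact (List.eq_nil_of_length_eq_zero (by simp)).symm
    · rintro ⟨x, rfl, -⟩
      exact List.eq_nil_of_length_eq_zero (by simp)
  | succ h ih =>
    ext w
    have e : (h + 1) * k = k + h * k := by ring
    simp only [power, Set.mem_setOf_eq]
    constructor
    · rintro ⟨u, hu, v, hv, rfl⟩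
      rw [ih] at hv
      obtain ⟨y, rfl, hy⟩ := hu
      obtain ⟨z, rfl, hz⟩ := hv
      refine ⟨(Fin.addCases y z : Fin (k + h * k) → N) ∘ Fin.cast e, ?_, ?_⟩
      · rw [ofFn_comp_cast e, List.ofFn_add]
        simp
        funext i
        exact (Fin.addCases_left (motive := fun _ => N) i).symm
      · intro i
        refine Fin.cases ?_ ?_ i
        · convert hy using 2 with j
          have : Fin.cast e (blockIdx (0 : Fin (h+1)) j) = Fin.castAdd (h * k) j := by
            ext; simp [blockIdx]
          simp [Function.comp, this]
        · intro i'
          convert hz i' using 2 with j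
          have : Fin.cast e (blockIdx i'.succ j) = Fin.natAdd k (blockIdx i' j) := by
            ext; simp [blockIdx, Fin.succ]; ring
          simp [Function.comp, this]
    · rintro ⟨x, rfl, hx⟩
      set x' : Fin (k + h * k) → N := x ∘ Fin.cast e.symm with hx'
      have h1 : φ.sat fun j => x' (Fin.castAdd (h * k) j) := by
        convert hx 0 using 2 with j
        simp only [hx', Function.comp]
        congr 1
        ext; simp [blockIdx]
      have h2 : ∀ i : Fin h, φ.sat fun j => x' (Fin.natAdd k (blockIdx i j)) := by
        intro i
        convert hx i.succ using 2 with j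
        simp only [hx', Function.comp]
        congr 1
        ext; simp [blockIdx, Fin.succ]; ring
      refine ⟨_, ⟨_, rfl, h1⟩, _,
        (by rw [ih]; exact ⟨fun j => x' (Fin.natAdd k j), rfl, h2⟩), ?_⟩
      exact (ofFn_comp_cast e.symm x).symm.trans List.ofFn_add


theorem power_patLang_and_star {N : Type} [Countable N] [Infinite N]
    (k : ℕ) (φ : Fresh N k) :
    (∀ h : ℕ, ∃ ψ : Fresh N (h * k),
      (∀ x : Fin (h * k) → N,
        ψ.sat x ↔ ∀ i : Fin h, φ.sat fun j => x (blockIdx i j)) ∧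
      power (patLang k φ) h = patLang (h * k) ψ) ∧
    ∃ (m : ℕ → ℕ) (χ : (h : ℕ) → Fresh N (m h)),
      kstar (patLang k φ) = ⋃ h, patLang (m h) (χ h) := by
  have key : ∀ h : ℕ, power (patLang k φ) h = patLang (h * k) (psiAux k φ h) := by
    intro h
    rw [power_eq]
    ext w
    simp [patLang, sat_psiAux]
  refine ⟨fun h => ⟨psiAux k φ h, sat_psiAux k φ h, key h⟩,
    fun h => h * k, fun h => psiAux k φ h, ?_⟩
  simp only [kstar, key]
end

section
/- The language L_ths is equivariant: for every permutation π : Equiv.Perm N, the image of L_ths under the map sending a word w to w mapped symbolwise by Sum.map id π equals L_ths. -/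
/-- The language `L_thr(r)`: unions over `h` of words
`v₀ d v₁ d ⋯ v_h d` where each block `v_j` uses only two distinct names
`p ≠ p'`, both different from `r`. -/
def Lthr {S N : Type} (d : S) (r : N) : Set (List (S ⊕ N)) :=
  { w | ∃ (h : ℕ) (v : Fin (h + 1) → List (S ⊕ N)),
      (∀ j, ∃ p p' : N, p ≠ p' ∧ p ≠ r ∧ p' ≠ r ∧
        ∀ x ∈ v j, x = Sum.inr p ∨ x = Sum.inr p') ∧
      w = (List.ofFn fun j : Fin (h + 1) => v j ++ [Sum.inl d]).flatten }

/-- The language `L_ths`: words `a b r₀ w₀ r₀ ⋯ r_k w_k r_k` where each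
`wᵢ ∈ L_thr(rᵢ)` and `rᵢ` does not occur in the earlier part
`r₀ w₀ r₀ ⋯ r_{i−1} w_{i−1} r_{i−1}` (relative global freshness). -/
def Lths {S N : Type} (a b d : S) : Set (List (S ⊕ N)) :=
  { w | ∃ (k : ℕ) (r : Fin (k + 1) → N) (wv : Fin (k + 1) → List (S ⊕ N)),
      (∀ i, wv i ∈ Lthr d (r i)) ∧
      (∀ i : Fin (k + 1),
        Sum.inr (r i) ∉
          (List.ofFn fun j : Fin (k + 1) =>
            if j < i then [Sum.inr (r j)] ++ wv j ++ [Sum.inr (r j)]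
            else ([] : List (S ⊕ N))).flatten) ∧
      w = [Sum.inl a, Sum.inl b] ++
        (List.ofFn fun i : Fin (k + 1) =>
          [Sum.inr (r i)] ++ wv i ++ [Sum.inr (r i)]).flatten }

lemma sumMap_inj {S N : Type} (π : Equiv.Perm N) :
    Function.Injective (Sum.map (id : S → S) ⇑π) := by
  have h : Sum.map (id : S → S) ⇑π = ⇑(Equiv.sumCongr (Equiv.refl S) π) := by
    funext x; cases x <;> rfl
  rw [h]; exact Equiv.injective _

lemma Lthr_map {S N : Type} (d : S) (r : N) (π : Equiv.Perm N)
    {w : List (S ⊕ N)} (hw : w ∈ Lthr d r) :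
    w.map (Sum.map id ⇑π) ∈ Lthr d (π r) := by
  obtain ⟨h, v, hv, rfl⟩ := hw
  refine ⟨h, fun j => (v j).map (Sum.map id ⇑π), fun j => ?_, ?_⟩
  · obtain ⟨p, p', hpp, hpr, hp'r, hmem⟩ := hv j
    refine ⟨π p, π p', fun h => hpp (π.injective h), fun h => hpr (π.injective h),
      fun h => hp'r (π.injective h), ?_⟩
    intro x hx
    simp only [List.mem_map] at hx
    obtain ⟨y, hy, rfl⟩ := hx
    rcases hmem y hy with rfl | rfl
    · left; rfl
    · right; rfl
  · simp [List.map_flatten, List.map_ofFn, Function.comp_def]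

lemma Lths_map_subset {S N : Type} (a b d : S) (π : Equiv.Perm N) :
    (fun w : List (S ⊕ N) => w.map (Sum.map id ⇑π)) '' Lths a b d ⊆ Lths a b d := by
  rintro _ ⟨w, ⟨k, r, wv, hwv, hfresh, rfl⟩, rfl⟩
  refine ⟨k, fun i => π (r i), fun i => (wv i).map (Sum.map id ⇑π),
    fun i => Lthr_map d (r i) π (hwv i), fun i hi => hfresh i ?_, ?_⟩
  · have : Sum.inr (π (r i)) = Sum.map (id : S → S) ⇑π (Sum.inr (r i)) := rfl
    rw [this] at hi
    have heq : (List.ofFn fun j : Fin (k + 1) =>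
        if j < i then [Sum.inr (π (r j))] ++ (wv j).map (Sum.map id ⇑π) ++ [Sum.inr (π (r j))]
        else ([] : List (S ⊕ N))).flatten =
        ((List.ofFn fun j : Fin (k + 1) =>
        if j < i then [Sum.inr (r j)] ++ wv j ++ [Sum.inr (r j)]
        else ([] : List (S ⊕ N))).flatten).map (Sum.map id ⇑π) := by
      have hj : ∀ j : Fin (k + 1),
          (if j < i then [Sum.inr (π (r j))] ++ (wv j).map (Sum.map id ⇑π) ++ [Sum.inr (π (r j))]
            else ([] : List (S ⊕ N))) =
          (if j < i then [Sum.inr (r j)] ++ wv j ++ [Sum.inr (r j)]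
            else ([] : List (S ⊕ N))).map (Sum.map id ⇑π) := fun j => by
        by_cases hji : j < i <;> simp [hji]
      simp only [List.map_flatten, List.map_ofFn, Function.comp_def, hj]
    rw [heq] at hi
    exact (List.mem_map_of_injective (sumMap_inj π)).mp hi
  · simp [List.map_flatten, List.map_ofFn, Function.comp_def]

theorem Lths_equivariant {S N : Type} [Countable N] [Infinite N]
    (a b d : S) (hab : a ≠ b) (π : Equiv.Perm N) :
    (fun w : List (S ⊕ N) => w.map (Sum.map id π)) '' Lths a b d = Lths a b d := by
  apply Set.Subset.antisymm (Lths_map_subset a b d π)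
  intro w hw
  refine ⟨w.map (Sum.map id ⇑π⁻¹), Lths_map_subset a b d π⁻¹ ⟨w, hw, rfl⟩, ?_⟩
  simp only [List.map_map]
  have : (Sum.map (id : S → S) ⇑π) ∘ (Sum.map (id : S → S) ⇑π⁻¹) = id := by
    funext x; cases x <;> simp [Sum.map]
  rw [this, List.map_id]
end
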